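/- For all integers n ≥ 0 and k ≥ 0, x^n + y^n = ∑_{j=0}^{⌊n/2⌋} (-1)^j (n/(n-j)) C(n-j, j) (xy)^j (x+y)^{n-2j} for commuting indeterminates x, y (with the convention that the j = n-j = 0 term is interpreted appropriately for n = 0). -/

import Mathlib

open Finset


noncomputable def wc (n j : ℕ) : ℚ :=
  (-1) ^ j * (if n = 0 then 2 else (n : ℚ) / ((n : ℚ) - (j : ℚ)) * ((n - j).choose j))

lemma wc_zero {n j : ℕ} (hn : n ≠ 0) (h : n < 2 * j) : wc n j = 0 := by
  have hj : n - j < j := by omega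
  simp [wc, hn, Nat.choose_eq_zero_of_lt hj]

lemma wc_zero' {n : ℕ} (hn : n ≠ 0) : wc n 0 = 1 := by
  have : (n : ℚ) ≠ 0 := Nat.cast_ne_zero.mpr hn
  simp [wc, hn, div_self this]

lemma wc_rec {n j : ℕ} (hn : 1 ≤ n) (hj : 1 ≤ j) :
    wc (n + 2) j = wc (n + 1) j - wc n (j - 1) := by
  rcases lt_trichotomy (n + 2) (2 * j) with h | h | h
  · rw [wc_zero (by omega) h, wc_zero (by omega) (by omega),
      wc_zero (by omega) (by omega : n < 2 * (j - 1))]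
    ring
  · -- boundary: 2j = n+2, n even, j ≥ 2
    have hj2 : 2 ≤ j := by omega
    rw [wc_zero (by omega : n + 1 ≠ 0) (by omega)]
    have h1 : n + 2 - j = j := by omega
    have h2 : n - (j - 1) = j - 1 := by omega
    obtain ⟨k, rfl⟩ : ∃ k, j = k + 2 := ⟨j - 2, by omega⟩
    have hn' : n = 2 * k + 2 := by omega
    subst hn'
    simp only [wc, if_neg (by omega : ¬(2 * k + 2 + 2 = 0)), if_neg (by omega : ¬(2 * k + 2 = 0)),
      h1, h2, Nat.choose_self]
    push_cast [show 2 * k + 2 + 2 - (k + 2) = k + 2 from by omega,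
      show 2 * k + 2 - (k + 2 - 1) = k + 1 from by omega,
      show k + 2 - 1 = k + 1 from by omega]
    have hk1 : ((k : ℚ) + 2) ≠ 0 := by positivity
    have hk2 : ((k : ℚ) + 1) ≠ 0 := by positivity
    have i1 : ((k : ℚ) + 2) * ((k : ℚ) + 2)⁻¹ = 1 := mul_inv_cancel₀ hk1
    have i2 : ((k : ℚ) + 1) * ((k : ℚ) + 1)⁻¹ = 1 := mul_inv_cancel₀ hk2
    ring_nf
    linear_combination (2 * (-1:ℚ)^k) * i1 - (2 * (-1:ℚ)^k) * i2
  · -- generic: 2j ≤ n+1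
    have hjn : j ≤ n := by omega
    obtain ⟨k, rfl⟩ : ∃ k, j = k + 1 := ⟨j - 1, by omega⟩
    have hP : (n + 2 - (k + 1)).choose (k + 1)
        = (n - k).choose k + (n - k).choose (k + 1) := by
      rw [show n + 2 - (k + 1) = (n - k) + 1 from by omega]
      exact Nat.choose_succ_succ _ _
    have hR := Nat.choose_succ_right_eq (n - k) k
    rw [show n - k - k = n - 2 * k from by omega] at hR
    qify [show 2 * k ≤ n from by omega] at hR
    simp only [wc, if_neg (by omega : ¬(n + 2 = 0)), if_neg (by omega : ¬(n + 1 = 0)),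
      if_neg (by omega : ¬(n = 0)), Nat.add_sub_cancel, hP,
      show n + 1 - (k + 1) = n - k from by omega, show k + 1 - 1 = k from by omega]
    push_cast
    set A : ℚ := ((n - k).choose (k + 1) : ℚ) with hA
    set B : ℚ := ((n - k).choose k : ℚ) with hB
    have hk1 : ((k : ℚ) + 1) ≠ 0 := by positivity
    have hAe : A = B * ((n : ℚ) - 2 * k) / ((k : ℚ) + 1) := by
      rw [eq_div_iff hk1]; linarith [hR]
    have d1 : (n : ℚ) + 2 - ((k : ℚ) + 1) ≠ 0 := by
      have : (k : ℚ) + 1 ≤ n + 1 := by exact_mod_cast (by omega : k + 1 ≤ n + 1)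
      intro hc; nlinarith
    have d2 : (n : ℚ) - (k : ℚ) ≠ 0 := by
      have : (k : ℚ) < n := by exact_mod_cast (by omega : k < n)
      intro hc; nlinarith
    rw [hAe, pow_succ, show (n : ℚ) + 1 - ((k : ℚ) + 1) = (n : ℚ) - (k : ℚ) by ring]
    field_simp
    ring

open Finset in
lemma wc_step (R : Type*) [CommRing R] [Algebra ℚ R] (x y : R) (n : ℕ) (hn : 1 ≤ n) :
    (∑ j ∈ Finset.range ((n + 2) / 2 + 1),
        algebraMap ℚ R (wc (n + 2) j) * ((x * y) ^ j * (x + y) ^ (n + 2 - 2 * j)))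
      = (x + y) * (∑ j ∈ Finset.range ((n + 1) / 2 + 1),
            algebraMap ℚ R (wc (n + 1) j) * ((x * y) ^ j * (x + y) ^ (n + 1 - 2 * j)))
        - x * y * (∑ j ∈ Finset.range (n / 2 + 1),
            algebraMap ℚ R (wc n j) * ((x * y) ^ j * (x + y) ^ (n - 2 * j))) := by
  set φ := algebraMap ℚ R
  set T : ℕ → R := fun j => (x * y) ^ j * (x + y) ^ (n + 2 - 2 * j) with hT
  have h2 : (∑ j ∈ Finset.range ((n + 2) / 2 + 1),
      φ (wc (n + 2) j) * ((x * y) ^ j * (x + y) ^ (n + 2 - 2 * j)))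
      = ∑ j ∈ Finset.range (n / 2 + 2), φ (wc (n + 2) j) * T j := by
    rw [show (n + 2) / 2 + 1 = n / 2 + 2 from by omega]
  have h1 : (x + y) * (∑ j ∈ Finset.range ((n + 1) / 2 + 1),
      φ (wc (n + 1) j) * ((x * y) ^ j * (x + y) ^ (n + 1 - 2 * j)))
      = ∑ j ∈ Finset.range (n / 2 + 2), φ (wc (n + 1) j) * T j := by
    rw [Finset.mul_sum]
    have e1 : ∀ j ∈ Finset.range ((n + 1) / 2 + 1),
        (x + y) * (φ (wc (n + 1) j) * ((x * y) ^ j * (x + y) ^ (n + 1 - 2 * j)))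
          = φ (wc (n + 1) j) * T j := by
      intro j hj
      rw [Finset.mem_range] at hj
      have : n + 2 - 2 * j = (n + 1 - 2 * j) + 1 := by omega
      rw [hT]; dsimp only
      rw [this, pow_succ]
      ring
    rw [Finset.sum_congr rfl e1]
    apply Finset.sum_subset
    · intro j hj; rw [Finset.mem_range] at *; omega
    · intro j _ hj
      rw [Finset.mem_range] at hj
      rw [wc_zero (by omega) (by omega), map_zero, zero_mul]
  have h0 : x * y * (∑ j ∈ Finset.range (n / 2 + 1),
      φ (wc n j) * ((x * y) ^ j * (x + y) ^ (n - 2 * j)))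
      = ∑ j ∈ Finset.range (n / 2 + 2),
          (if j = 0 then 0 else φ (wc n (j - 1))) * T j := by
    rw [Finset.sum_range_succ' (fun j => (if j = 0 then 0 else φ (wc n (j - 1))) * T j) (n / 2 + 1)]
    have hz : (if (0:ℕ) = 0 then (0:R) else φ (wc n (0 - 1))) * T 0 = 0 := by simp
    rw [hz, add_zero, Finset.mul_sum]
    apply Finset.sum_congr rfl
    intro j hj
    rw [Finset.mem_range] at hj
    rw [if_neg (Nat.succ_ne_zero j), Nat.add_sub_cancel]
    rw [hT]; dsimp only
    rw [show n + 2 - 2 * (j + 1) = n - 2 * j from by omega, pow_succ]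
    ring
  rw [h2, h1, h0, ← Finset.sum_sub_distrib]
  apply Finset.sum_congr rfl
  intro j _
  rcases Nat.eq_zero_or_pos j with rfl | hj
  · rw [if_pos rfl, wc_zero' (by omega : n + 2 ≠ 0), wc_zero' (by omega : n + 1 ≠ 0)]
    ring
  · rw [if_neg (by omega), wc_rec hn hj, map_sub]
    ring

open Finset in
lemma pow_add_pow_eq_sum_aux (R : Type*) [CommRing R] [Algebra ℚ R] (x y : R) (n : ℕ) :
    x ^ n + y ^ n = ∑ j ∈ Finset.range (n / 2 + 1),
      algebraMap ℚ R (wc n j) * ((x * y) ^ j * (x + y) ^ (n - 2 * j)) := by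
  set φ := algebraMap ℚ R
  have base0 : x ^ 0 + y ^ 0 = ∑ j ∈ Finset.range (0 / 2 + 1),
      φ (wc 0 j) * ((x * y) ^ j * (x + y) ^ (0 - 2 * j)) := by
    have h00 : wc 0 0 = (1:ℚ) + 1 := by norm_num [wc]
    rw [Finset.sum_range_one, h00, map_add, map_one]
    norm_num
  have base1 : x ^ 1 + y ^ 1 = ∑ j ∈ Finset.range (1 / 2 + 1),
      φ (wc 1 j) * ((x * y) ^ j * (x + y) ^ (1 - 2 * j)) := by
    simp [wc_zero' (by omega : (1:ℕ) ≠ 0)]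
  have base2 : x ^ 2 + y ^ 2 = ∑ j ∈ Finset.range (2 / 2 + 1),
      φ (wc 2 j) * ((x * y) ^ j * (x + y) ^ (2 - 2 * j)) := by
    have hw : wc 2 1 = -2 := by norm_num [wc]
    rw [show (2 / 2 + 1 : ℕ) = 2 from rfl, Finset.sum_range_succ, Finset.sum_range_succ,
      Finset.sum_range_zero, hw, wc_zero' (by omega : (2:ℕ) ≠ 0)]
    rw [show ((-2:ℚ) = -((1:ℚ) + 1)) from by norm_num, map_neg, map_add, map_one]
    ring
  have key : ∀ m : ℕ,
      (x ^ m + y ^ m = ∑ j ∈ Finset.range (m / 2 + 1),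
        φ (wc m j) * ((x * y) ^ j * (x + y) ^ (m - 2 * j))) ∧
      (x ^ (m + 1) + y ^ (m + 1) = ∑ j ∈ Finset.range ((m + 1) / 2 + 1),
        φ (wc (m + 1) j) * ((x * y) ^ j * (x + y) ^ (m + 1 - 2 * j))) := by
    intro m
    induction m with
    | zero => exact ⟨base0, base1⟩
    | succ k ih =>
      refine ⟨ih.2, ?_⟩
      rcases Nat.eq_zero_or_pos k with rfl | hk
      · exact base2
      · rw [wc_step R x y k hk, ← ih.1, ← ih.2]
        ring
  exact (key n).1


/-- `x^n + y^n = ∑_{j=0}^{⌊n/2⌋} (-1)^j (n/(n-j)) C(n-j,j) (xy)^j (x+y)^{n-2j}`,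
with the `n = 0` term interpreted as `2`. -/
theorem pow_add_pow_eq_sum (R : Type*) [CommRing R] [Algebra ℚ R]
    (x y : R) (n : ℕ) :
    x ^ n + y ^ n
      = ∑ j ∈ Finset.range (n / 2 + 1),
          algebraMap ℚ R ((-1) ^ j *
            (if n = 0 then 2 else (n : ℚ) / ((n : ℚ) - (j : ℚ)) * ((n - j).choose j)))
            * ((x * y) ^ j * (x + y) ^ (n - 2 * j)) := by
  simpa only [wc] using pow_add_pow_eq_sum_aux R x y n
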